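/- Let θ ∈ 𝕜. Then the following are equivalent: (i) the tridiagonal matrix representing A with respect to the fixed feasible basis has constant row sum θ, i.e., c_i + a_i + b_i = θ for 0 ≤ i ≤ d (with the conventions c_0 = 0 and b_d = 0); (ii) θ is an eigenvalue of A and u_i(θ) = 1 for 0 ≤ i ≤ d. -/

import Mathlib

/-- The matrix representing A has constant row sum θ iff θ is an eigenvalue of A and
uᵢ(θ) = 1 for 0 ≤ i ≤ d. -/
theorem stmt_17 {𝕜 : Type*} [Field 𝕜] {V : Type*} [AddCommGroup V] [Module 𝕜 V]
    [FiniteDimensional 𝕜 V] {d : ℕ} (hdim : Module.finrank 𝕜 V = d + 1)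
    (A : Module.End 𝕜 V)
    (Estar : Fin (d + 1) → Module.End 𝕜 V)
    (hidem : ∀ i j, Estar i * Estar j = if i = j then Estar i else 0)
    (hrank : ∀ i, Module.finrank 𝕜 (LinearMap.range (Estar i)) = 1)
    (htri : ∀ i j : Fin (d + 1), 1 < |((i : ℕ) : ℤ) - ((j : ℕ) : ℤ)| → Estar i * A * Estar j = 0)
    (hirr : ∀ i j : Fin (d + 1), |((i : ℕ) : ℤ) - ((j : ℕ) : ℤ)| = 1 → Estar i * A * Estar j ≠ 0)
    (hd : 1 ≤ d)
    (θ : Fin (d + 1) → 𝕜) (hθ : Function.Injective θ)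
    (E : Fin (d + 1) → Module.End 𝕜 V)
    (hEidem : ∀ i j, E i * E j = if i = j then E i else 0)
    (hErank : ∀ i, Module.finrank 𝕜 (LinearMap.range (E i)) = 1)
    (hA : A = ∑ i, θ i • E i)
    (v : Module.Basis (Fin (d + 1)) 𝕜 V) (hfeas : ∀ i, v i ∈ LinearMap.range (Estar i))
    (a b c : ℕ → 𝕜)
    (hM : ∀ i j : Fin (d + 1), LinearMap.toMatrix v v A i j =
      if (i : ℕ) = (j : ℕ) then a i
      else if (i : ℕ) + 1 = (j : ℕ) then b i
      else if (j : ℕ) + 1 = (i : ℕ) then c i else 0)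
    (ha : ∀ i : Fin (d + 1), a i = LinearMap.trace 𝕜 V (Estar i * A))
    (hb : ∀ i, i < d → b i ≠ 0) (hbd : b d = 0)
    (hc : ∀ i, 0 < i → i ≤ d → c i ≠ 0) (hc0 : c 0 = 0)
    (u : ℕ → Polynomial 𝕜) (hu0 : u 0 = 1)
    (hu : ∀ i, i < d → Polynomial.X * u i =
      Polynomial.C (c i) * u (i - 1) + Polynomial.C (a i) * u i + Polynomial.C (b i) * u (i + 1))
    (hud : Polynomial.X * u d =
      Polynomial.C (c d) * u (d - 1) + Polynomial.C (a d) * u d +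
        Polynomial.C (∏ h ∈ Finset.range d, b h)⁻¹ * u (d + 1))
    (θv : 𝕜) :
    (∀ i ≤ d, c i + a i + b i = θv)
      ↔ (Module.End.HasEigenvalue A θv ∧ ∀ i ≤ d, (u i).eval θv = 1) := by
    classical
  set M : Matrix (Fin (d + 1)) (Fin (d + 1)) 𝕜 := LinearMap.toMatrix v v A with hMdef
  set e : ℕ → 𝕜 := fun n => (u n).eval θv with he
  have he0 : e 0 = 1 := by simp [he, hu0]
  have heRec : ∀ n, n < d → θv * e n = c n * e (n - 1) + a n * e n + b n * e (n + 1) := by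
    intro n hn
    have h := congrArg (Polynomial.eval θv) (hu n hn)
    simpa [he] using h
  -- extension of a Fin-indexed vector to ℕ
  set ext : (Fin (d + 1) → 𝕜) → ℕ → 𝕜 :=
    fun ξ n => if h : n < d + 1 then ξ ⟨n, h⟩ else 0 with hext
  have hext_lt : ∀ (ξ : Fin (d + 1) → 𝕜) (n : ℕ) (h : n < d + 1), ext ξ n = ξ ⟨n, h⟩ := by
    intro ξ n h; simp only [hext, dif_pos h]
  have hext_ge : ∀ (ξ : Fin (d + 1) → 𝕜) (n : ℕ), ¬ n < d + 1 → ext ξ n = 0 := by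
    intro ξ n h; simp only [hext, dif_neg h]
  -- the key mulVec row computation
  have mulrow : ∀ (ξ : Fin (d + 1) → 𝕜) (i : Fin (d + 1)),
      M.mulVec ξ i = c i * ext ξ ((i : ℕ) - 1) + a i * ext ξ (i : ℕ)
        + b i * ext ξ ((i : ℕ) + 1) := by
    intro ξ i
    have step1 : M.mulVec ξ i = ∑ j : Fin (d + 1),
        ((if (i : ℕ) = (j : ℕ) then a i
          else if (i : ℕ) + 1 = (j : ℕ) then b i
          else if (j : ℕ) + 1 = (i : ℕ) then c i else 0) * ext ξ (j : ℕ)) := by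
      simp only [Matrix.mulVec, dotProduct]
      refine Finset.sum_congr rfl ?_
      intro j _
      rw [hM i j, hext_lt ξ (j : ℕ) j.isLt]
    rw [step1]
    have step2 : ∀ j : Fin (d + 1),
        ((if (i : ℕ) = (j : ℕ) then a i
          else if (i : ℕ) + 1 = (j : ℕ) then b i
          else if (j : ℕ) + 1 = (i : ℕ) then c i else 0) * ext ξ (j : ℕ)) =
        (if (i : ℕ) = (j : ℕ) then a i * ext ξ (j : ℕ) else 0)
        + (if (i : ℕ) + 1 = (j : ℕ) then b i * ext ξ (j : ℕ) else 0)
        + (if (i : ℕ) - 1 = (j : ℕ) then (if 0 < (i : ℕ) then c i else 0) * ext ξ (j : ℕ)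
            else 0) := by
      intro j
      split_ifs <;> first | omega | ring
    rw [Finset.sum_congr rfl (fun j _ => step2 j)]
    rw [Finset.sum_add_distrib, Finset.sum_add_distrib]
    have s1 : (∑ j : Fin (d + 1), if (i : ℕ) = (j : ℕ) then a i * ext ξ (j : ℕ) else 0)
        = a i * ext ξ (i : ℕ) := by
      have : ∀ j : Fin (d + 1), ((i : ℕ) = (j : ℕ)) ↔ i = j := by
        intro j; rw [Fin.ext_iff]
      simp_rw [this]
      rw [Finset.sum_ite_eq]; simp
    have s2 : (∑ j : Fin (d + 1), if (i : ℕ) + 1 = (j : ℕ) then b i * ext ξ (j : ℕ) else 0)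
        = b i * ext ξ ((i : ℕ) + 1) := by
      by_cases hlt : (i : ℕ) + 1 < d + 1
      · have : ∀ j : Fin (d + 1), ((i : ℕ) + 1 = (j : ℕ)) ↔ (⟨(i : ℕ) + 1, hlt⟩ : Fin (d + 1)) = j := by
          intro j; rw [Fin.ext_iff]
        simp_rw [this]
        rw [Finset.sum_ite_eq]
        simp [hext_lt ξ ((i : ℕ) + 1) hlt]
      · have : ∀ j : Fin (d + 1), ¬ ((i : ℕ) + 1 = (j : ℕ)) := by
          intro j h; exact hlt (h ▸ j.isLt)
        simp only [this, if_false, Finset.sum_const_zero]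
        rw [hext_ge ξ ((i : ℕ) + 1) hlt]; ring
    have s3 : (∑ j : Fin (d + 1), if (i : ℕ) - 1 = (j : ℕ)
          then (if 0 < (i : ℕ) then c i else 0) * ext ξ (j : ℕ) else 0)
        = c i * ext ξ ((i : ℕ) - 1) := by
      have hlt : (i : ℕ) - 1 < d + 1 := by omega
      have : ∀ j : Fin (d + 1), ((i : ℕ) - 1 = (j : ℕ)) ↔ (⟨(i : ℕ) - 1, hlt⟩ : Fin (d + 1)) = j := by
        intro j; rw [Fin.ext_iff]
      simp_rw [this]
      rw [Finset.sum_ite_eq]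
      simp only [Finset.mem_univ, if_true]
      by_cases hpos : 0 < (i : ℕ)
      · simp [hpos]
      · have hi0 : (i : ℕ) = 0 := by omega
        simp [hpos, hi0, hc0]
    rw [s1, s2, s3]; ring
  -- coordinate recurrence for eigenvectors
  have coordRec : ∀ (x : V), A x = θv • x → ∀ n : ℕ, n < d + 1 →
      θv * ext (v.repr x) n = c n * ext (v.repr x) (n - 1) + a n * ext (v.repr x) n
        + b n * ext (v.repr x) (n + 1) := by
    intro x hx n hn
    have h1 : M.mulVec (v.repr x) = v.repr (A x) := LinearMap.toMatrix_mulVec_repr v v A x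
    have h2 := congrFun h1 ⟨n, hn⟩
    rw [mulrow (v.repr x) ⟨n, hn⟩] at h2
    rw [hx, map_smul] at h2
    have h3 : (v.repr x) ⟨n, hn⟩ = ext (v.repr x) n := (hext_lt _ n hn).symm
    simp only [Finsupp.coe_smul, Pi.smul_apply, smul_eq_mul] at h2
    rw [h3] at h2
    exact h2.symm
  constructor
  · -- forward direction
    intro hrow
    have heval : ∀ i ≤ d, e i = 1 := by
      intro n
      induction n using Nat.strong_induction_on with
      | _ n ih =>
        intro hn
        match n, hn with
        | 0, _ => exact he0
        | (m + 1), hn =>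
          have hmd : m < d := by omega
          have h1 : e m = 1 := ih m (by omega) (by omega)
          have h2 : e (m - 1) = 1 := ih (m - 1) (by omega) (by omega)
          have hr := heRec m hmd
          rw [h1, h2] at hr
          have hrs := hrow m (by omega)
          have hbm := hb m hmd
          exact mul_left_cancel₀ hbm (by linear_combination -hr - hrs)
    refine ⟨?_, heval⟩
    -- θv is an eigenvalue, witnessed by the all-ones vector
    set w : V := ∑ i : Fin (d + 1), v i with hw
    have hreprw : ∀ i, v.repr w i = 1 := by
      intro i
      rw [hw, map_sum]
      simp only [Finsupp.coe_finset_sum, Finset.sum_apply, Module.Basis.repr_self,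
        Finsupp.single_apply]
      rw [Finset.sum_ite_eq']
      simp
    have hextw : ∀ n, n < d + 1 → ext (v.repr w) n = 1 := by
      intro n hn; rw [hext_lt _ n hn]; exact hreprw _
    have key : ∀ i : Fin (d + 1), M.mulVec (v.repr w) i = θv * (v.repr w) i := by
      intro i
      rw [mulrow (v.repr w) i]
      rw [hextw ((i : ℕ) - 1) (by omega), hextw (i : ℕ) i.isLt]
      rw [hreprw i]
      by_cases hid : (i : ℕ) < d
      · rw [hextw ((i : ℕ) + 1) (by omega)]
        have := hrow (i : ℕ) (by omega)
        rw [mul_one, mul_one, mul_one, mul_one]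
        linear_combination this
      · have hieq : (i : ℕ) = d := by omega
        rw [hext_ge _ ((i : ℕ) + 1) (by omega)]
        have := hrow (i : ℕ) (by omega)
        rw [mul_one, mul_one, mul_zero, mul_one]
        rw [hieq] at this ⊢
        rw [hbd] at this
        linear_combination this
    have hAw : A w = θv • w := by
      apply v.repr.injective
      ext i
      have h1 := congrFun (LinearMap.toMatrix_mulVec_repr v v A w) i
      rw [← hMdef] at h1
      rw [map_smul]
      have h2 : (v.repr (A w)) i = M.mulVec (v.repr w) i := h1.symm
      rw [h2, key i]
      simp
    have hw0 : w ≠ 0 := by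
      intro h0
      have := hreprw 0
      rw [h0] at this
      simp at this
    exact Module.End.hasEigenvalue_of_hasEigenvector
      ⟨Module.End.mem_eigenspace_iff.mpr hAw, hw0⟩
  · -- backward direction
    rintro ⟨heig, heval⟩
    have heval' : ∀ i ≤ d, e i = 1 := by
      intro i hi; simpa [he] using heval i hi
    have hlt : ∀ i, i < d → c i + a i + b i = θv := by
      intro i hi
      have hr := heRec i hi
      rw [heval' i (by omega), heval' (i + 1) (by omega)] at hr
      rw [heval' (i - 1) (by omega)] at hr
      simp only [mul_one] at hr
      linear_combination -hr
    intro i hi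
    rcases lt_or_eq_of_le hi with hi' | hi'
    · exact hlt i hi'
    · subst hi'
      obtain ⟨x, hx⟩ := heig.exists_hasEigenvector
      have hAx : A x = θv • x := hx.apply_eq_smul
      have hx0 : x ≠ 0 := hx.right
      set ξ : ℕ → 𝕜 := ext (v.repr x) with hξ
      have hrec := coordRec x hAx
      have hconst : ∀ n ≤ i, ξ n = ξ 0 := by
        intro n
        induction n using Nat.strong_induction_on with
        | _ n ih =>
          intro hn
          match n, hn with
          | 0, _ => rfl
          | (m + 1), hn =>
            have hmd : m < i := by omega
            have h1 : ξ m = ξ 0 := ih m (by omega) (by omega)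
            have h2 : ξ (m - 1) = ξ 0 := ih (m - 1) (by omega) (by omega)
            have hr := hrec m (by omega)
            rw [← hξ] at hr
            rw [h1, h2] at hr
            have hrs := hlt m hmd
            exact mul_left_cancel₀ (hb m hmd) (by linear_combination -hr - ξ 0 * hrs)
      have hξ0 : ξ 0 ≠ 0 := by
        intro h0
        apply hx0
        apply (v.repr.map_eq_zero_iff).mp
        ext j
        have := hconst (j : ℕ) (Nat.lt_succ_iff.mp j.isLt)
        rw [h0] at this
        rw [hξ, hext_lt _ (j : ℕ) j.isLt] at this
        simpa using this
      have hr := hrec i (by omega)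
      rw [← hξ] at hr
      rw [hconst i (le_refl i), hconst (i - 1) (by omega)] at hr
      have hξe : ξ (i + 1) = 0 := by
        rw [hξ]; exact hext_ge _ (i + 1) (by omega)
      rw [hξe, mul_zero] at hr
      have h2 : (c i + a i) * ξ 0 = θv * ξ 0 := by linear_combination -hr
      have h3 := mul_right_cancel₀ hξ0 h2
      rw [hbd]
      linear_combination h3
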